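/- Let (F;R₁,…,R_n) be a normal (n+1)-ad of groups and k ≥ 2. Suppose that for every 1 ≤ j ≤ n the normal (j+1)-ad (F;R₁,…,R_j) is simple relative to R_j. Then for every 1 ≤ j ≤ n: (⋂_{i∈⟨j⟩} R_i) ∩ Γ_k(F) = D_k(F;⟨j⟩). -/

import Mathlib

open Pointwise

/-- Iterated commutator `⁅H₁, ⁅H₂, …, ⁅H_{k-1}, H_k⁆…⁆⁆` of a list of subgroups. -/
def iterCommutator {F : Type*} [Group F] : List (Subgroup F) → Subgroup F
  | [] => ⊥
  | [H] => H
  | H :: t => ⁅H, iterCommutator t⁆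

/-- `K_B = ⋂_{i∈B} R_i`, with the convention `K_∅ = F`. -/
def adInf {F : Type*} [Group F] {n : ℕ} (R : Fin n → Subgroup F) (B : Finset (Fin n)) :
    Subgroup F :=
  ⨅ i ∈ B, R i

/-- `D_k(F;A)`: the product (join) of the iterated commutator subgroups
`⁅K_{A₁},⁅K_{A₂},…,⁅K_{A_{k-1}},K_{A_k}⁆…⁆⁆` over all `k`-tuples `(A₁,…,A_k)` of
(possibly empty) subsets with `A₁ ∪ ⋯ ∪ A_k = A`. -/
def adD {F : Type*} [Group F] {n : ℕ} (R : Fin n → Subgroup F) (k : ℕ) (A : Finset (Fin n)) :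
    Subgroup F :=
  ⨆ (c : Fin k → Finset (Fin n)) (_ : Finset.univ.sup c = A),
    iterCommutator (List.ofFn fun i => adInf R (c i))

namespace AdProof

open scoped commutatorElement

variable {F : Type*} [Group F]

theorem iterCommutator_nil : iterCommutator ([] : List (Subgroup F)) = ⊥ := rfl

theorem iterCommutator_singleton (H : Subgroup F) : iterCommutator [H] = H := rfl

theorem iterCommutator_cons (H : Subgroup F) (l : List (Subgroup F)) (hl : l ≠ []) :
    iterCommutator (H :: l) = ⁅H, iterCommutator l⁆ := by
  cases l with
  | nil => exact absurd rfl hl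
  | cons K t => rfl

theorem normal_iSup {ι : Sort*} (H : ι → Subgroup F) (h : ∀ i, (H i).Normal) :
    (⨆ i, H i).Normal := by
  constructor
  intro x hx g
  refine Subgroup.iSup_induction H (C := fun y => g * y * g⁻¹ ∈ ⨆ i, H i) hx
    (fun i y hy => Subgroup.mem_iSup_of_mem i ((h i).conj_mem y hy g)) (by simp [Subgroup.one_mem]) ?_
  intro a b ha hb
  have h2 : g * a * g⁻¹ * (g * b * g⁻¹) = g * (a * b) * g⁻¹ := by group
  exact h2 ▸ Subgroup.mul_mem _ ha hb

theorem normal_inf' (H K : Subgroup F) (hH : H.Normal) (hK : K.Normal) : (H ⊓ K).Normal :=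
  ⟨fun x hx g => Subgroup.mem_inf.mpr
    ⟨hH.conj_mem x (Subgroup.mem_inf.mp hx).1 g, hK.conj_mem x (Subgroup.mem_inf.mp hx).2 g⟩⟩

theorem normal_iterCommutator : ∀ (l : List (Subgroup F)), (∀ H ∈ l, H.Normal) →
    (iterCommutator l).Normal
  | [], _ => by rw [iterCommutator_nil]; infer_instance
  | [H], h => by rw [iterCommutator_singleton]; exact h H (by simp)
  | H :: K :: t, h => by
    rw [iterCommutator_cons _ _ (by simp)]
    haveI := h H (by simp)
    haveI := normal_iterCommutator (K :: t) fun H' hH' => h H' (List.mem_cons_of_mem _ hH')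
    infer_instance

theorem iterCommutator_le_of_mem {N : Subgroup F} (hN : N.Normal) :
    ∀ (l : List (Subgroup F)) (H : Subgroup F), H ∈ l → H ≤ N → iterCommutator l ≤ N
  | [], H, hH, _ => by simp at hH
  | [K], H, hH, hle => by
    rw [List.mem_singleton] at hH
    rw [iterCommutator_singleton]; exact hH ▸ hle
  | K :: K' :: t, H, hH, hle => by
    haveI := hN
    rw [iterCommutator_cons _ _ (by simp)]
    rcases List.mem_cons.mp hH with h | h
    · exact (Subgroup.commutator_mono (h ▸ hle) le_top).trans
        (Subgroup.commutator_le_left N ⊤)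
    · exact (Subgroup.commutator_mono le_top
        (iterCommutator_le_of_mem hN (K' :: t) H h hle)).trans
        (Subgroup.commutator_le_right ⊤ N)

theorem iterCommutator_le_lcs : ∀ (l : List (Subgroup F)),
    iterCommutator l ≤ (⊤ : Subgroup F).lowerCentralSeries (l.length - 1)
  | [] => bot_le
  | [H] => by rw [iterCommutator_singleton]; exact le_top
  | H :: K :: t => by
    rw [iterCommutator_cons _ _ (by simp)]
    have h1 : iterCommutator (K :: t) ≤ (⊤ : Subgroup F).lowerCentralSeries ((K :: t).length - 1) :=
      iterCommutator_le_lcs (K :: t)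
    calc ⁅H, iterCommutator (K :: t)⁆
        ≤ ⁅⊤, (⊤ : Subgroup F).lowerCentralSeries ((K :: t).length - 1)⁆ := Subgroup.commutator_mono le_top h1
      _ = ⁅(⊤ : Subgroup F).lowerCentralSeries ((K :: t).length - 1), ⊤⁆ := Subgroup.commutator_comm _ _
      _ = (⊤ : Subgroup F).lowerCentralSeries ((K :: t).length - 1 + 1) := rfl
      _ = (⊤ : Subgroup F).lowerCentralSeries ((H :: K :: t).length - 1) := by simp

theorem iterCommutator_replicate_top : ∀ m : ℕ,
    iterCommutator (List.replicate (m + 1) (⊤ : Subgroup F)) = (⊤ : Subgroup F).lowerCentralSeries m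
  | 0 => by rw [List.replicate_one, iterCommutator_singleton]; rfl
  | m + 1 => by
    rw [List.replicate_succ, iterCommutator_cons _ _ (by simp),
      iterCommutator_replicate_top m]
    rw [show (⊤ : Subgroup F).lowerCentralSeries (m + 1) = ⁅(⊤ : Subgroup F).lowerCentralSeries m, ⊤⁆ from rfl,
      Subgroup.commutator_comm]

theorem commutator_iSup_le {ι : Sort*} (H : Subgroup F) (hH : H.Normal)
    (K : ι → Subgroup F) (hK : ∀ i, (K i).Normal) :
    ⁅H, ⨆ i, K i⁆ ≤ ⨆ i, ⁅H, K i⁆ := by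
  haveI := hH
  have hnorm : (⨆ i, ⁅H, K i⁆).Normal := normal_iSup _ fun i => by
    haveI := hK i; infer_instance
  rw [Subgroup.commutator_le]
  intro h hh k hk
  refine Subgroup.iSup_induction K (C := fun y => ⁅h, y⁆ ∈ ⨆ i, ⁅H, K i⁆) hk ?_ (by simp [Subgroup.one_mem]) ?_
  · intro i y hy
    exact Subgroup.mem_iSup_of_mem i (Subgroup.commutator_mem_commutator hh hy)
  · intro a b ha hb
    have hid : ⁅h, a * b⁆ = ⁅h, a⁆ * (a * ⁅h, b⁆ * a⁻¹) := by
      rw [commutatorElement_def, commutatorElement_def, commutatorElement_def]; group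
    rw [hid]
    exact Subgroup.mul_mem _ ha (hnorm.conj_mem _ hb a)

theorem commElt_mul_left {G : Type*} [Group G] {a b c : G} (h : Commute b c) :
    ⁅a * b, c⁆ = ⁅a, c⁆ := by
  rw [commutatorElement_def, commutatorElement_def, mul_inv_rev]
  calc a * b * c * (b⁻¹ * a⁻¹) * c⁻¹
      = a * (b * c) * b⁻¹ * a⁻¹ * c⁻¹ := by group
    _ = a * (c * b) * b⁻¹ * a⁻¹ * c⁻¹ := by rw [h.eq]
    _ = a * c * a⁻¹ * c⁻¹ := by group

theorem commElt_mul_right {G : Type*} [Group G] {a c d : G} (h : Commute a d) :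
    ⁅a, c * d⁆ = ⁅a, c⁆ := by
  rw [commutatorElement_def, commutatorElement_def, mul_inv_rev]
  have h2 : d * a⁻¹ = a⁻¹ * d := h.inv_left.eq.symm
  calc a * (c * d) * a⁻¹ * (d⁻¹ * c⁻¹)
      = a * c * (d * a⁻¹) * d⁻¹ * c⁻¹ := by group
    _ = a * c * (a⁻¹ * d) * d⁻¹ * c⁻¹ := by rw [h2]
    _ = a * c * a⁻¹ * c⁻¹ := by group



/-- Mixed term subgroup used in the key induction. -/
def SmixL (Rj : Subgroup F) : List (Subgroup F) → Subgroup F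
  | [] => ⊥
  | [H] => H ⊓ Rj
  | H :: t => ⁅H ⊓ Rj, iterCommutator t⁆ ⊔ ⁅H, SmixL Rj t⁆

theorem SmixL_nil (Rj : Subgroup F) : SmixL Rj [] = ⊥ := rfl

theorem SmixL_singleton (Rj H : Subgroup F) : SmixL Rj [H] = H ⊓ Rj := rfl

theorem SmixL_cons (Rj H : Subgroup F) (l : List (Subgroup F)) (hl : l ≠ []) :
    SmixL Rj (H :: l) = ⁅H ⊓ Rj, iterCommutator l⁆ ⊔ ⁅H, SmixL Rj l⁆ := by
  cases l with
  | nil => exact absurd rfl hl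
  | cons K t => rfl

theorem SmixL_normal (Rj : Subgroup F) (hRj : Rj.Normal) :
    ∀ l : List (Subgroup F), (∀ H ∈ l, H.Normal) → (SmixL Rj l).Normal
  | [], _ => by rw [SmixL_nil]; infer_instance
  | [H], h => by rw [SmixL_singleton]; exact normal_inf' _ _ (h H (by simp)) hRj
  | H :: K :: t, h => by
    rw [SmixL_cons _ _ _ (by simp)]
    haveI := h H (by simp)
    haveI := hRj
    haveI : (H ⊓ Rj).Normal := normal_inf' _ _ (h H (by simp)) hRj
    haveI := normal_iterCommutator (K :: t) fun H' hH' => h H' (List.mem_cons_of_mem _ hH')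
    haveI := SmixL_normal Rj hRj (K :: t) fun H' hH' => h H' (List.mem_cons_of_mem _ hH')
    infer_instance

/-- The key lemma: modulo the mixed terms, `ρ` acts as the identity on the
iterated commutator of a family of split normal subgroups. -/
theorem key_lemma (Rj : Subgroup F) (hRj : Rj.Normal) (ρ : F →* F) :
    ∀ l : List (Subgroup F), (∀ H ∈ l, H.Normal) →
      (∀ H ∈ l, ∀ x ∈ H, ρ x ∈ H ∧ (ρ x)⁻¹ * x ∈ H ⊓ Rj) →
      ∀ x ∈ iterCommutator l, ρ x ∈ iterCommutator l ∧ (ρ x)⁻¹ * x ∈ SmixL Rj l := by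
  intro l
  induction l with
  | nil => intro _ _ x hx; rw [iterCommutator_nil] at hx; simp at hx; subst hx
           refine ⟨?_, ?_⟩
           · rw [iterCommutator_nil]; simp
           · rw [SmixL_nil]; simp
  | cons H t ih =>
    intro hnorm hsplit x hx
    cases t with
    | nil =>
      rw [iterCommutator_singleton] at hx ⊢
      rw [SmixL_singleton]
      exact hsplit H (by simp) x hx
    | cons K t' =>
      -- notation
      set U := iterCommutator (K :: t') with hU
      set S' := SmixL Rj (K :: t') with hS'
      set S := SmixL Rj (H :: K :: t') with hS
      have htne : (K :: t') ≠ ([] : List (Subgroup F)) := by simp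
      have hSe : S = ⁅H ⊓ Rj, U⁆ ⊔ ⁅H, S'⁆ := SmixL_cons _ _ _ htne
      have hHnorm : H.Normal := hnorm H (by simp)
      have htnorm : ∀ H' ∈ K :: t', H'.Normal := fun H' hH' =>
        hnorm H' (List.mem_cons_of_mem _ hH')
      haveI := hHnorm
      haveI := hRj
      haveI hUnorm : U.Normal := normal_iterCommutator _ htnorm
      haveI hS'norm : S'.Normal := SmixL_normal Rj hRj _ htnorm
      haveI hSnorm : S.Normal := SmixL_normal Rj hRj _ fun H' hH' => hnorm H' hH'
      have ihU := ih htnorm fun H' hH' => hsplit H' (List.mem_cons_of_mem _ hH')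
      -- the subgroup of elements satisfying the conclusion
      set T := iterCommutator (H :: K :: t') with hT
      have hTe : T = ⁅H, U⁆ := iterCommutator_cons _ _ htne
      let X : Subgroup F :=
        { carrier := {x | ρ x ∈ T ∧ (ρ x)⁻¹ * x ∈ S}
          one_mem' := by simp [Subgroup.one_mem]
          mul_mem' := by
            rintro a b ⟨ha1, ha2⟩ ⟨hb1, hb2⟩
            refine ⟨by rw [map_mul]; exact Subgroup.mul_mem _ ha1 hb1, ?_⟩
            have he : (ρ (a * b))⁻¹ * (a * b)
                = ((ρ b)⁻¹ * ((ρ a)⁻¹ * a) * (ρ b)) * ((ρ b)⁻¹ * b) := by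
              rw [map_mul]; group
            rw [he]
            exact Subgroup.mul_mem _ (by
              have := hSnorm.conj_mem _ ha2 (ρ b)⁻¹
              simpa using this) hb2
          inv_mem' := by
            rintro a ⟨ha1, ha2⟩
            refine ⟨by rw [map_inv]; exact Subgroup.inv_mem _ ha1, ?_⟩
            have he : (ρ a⁻¹)⁻¹ * a⁻¹ = (ρ a) * ((ρ a)⁻¹ * a)⁻¹ * (ρ a)⁻¹ := by
              rw [map_inv]; group
            rw [he]
            exact hSnorm.conj_mem _ (Subgroup.inv_mem _ ha2) (ρ a) }
      have hTX : T ≤ X := by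
        rw [hTe, Subgroup.commutator_le]
        intro h hh u hu
        have hsp := hsplit H (by simp) h hh
        obtain ⟨hph, hmh⟩ := hsp
        obtain ⟨hqu, hsu⟩ := ihU u hu
        constructor
        · show ρ ⁅h, u⁆ ∈ T
          rw [map_commutatorElement, hTe]
          exact Subgroup.commutator_mem_commutator hph hqu
        · show (ρ ⁅h, u⁆)⁻¹ * ⁅h, u⁆ ∈ S
          rw [map_commutatorElement]
          rw [← QuotientGroup.eq (s := S)]
          -- work in F ⧸ S
          set π := QuotientGroup.mk' S with hπ
          show π ⁅ρ h, ρ u⁆ = π ⁅h, u⁆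
          have c1 : Commute (π ((ρ h)⁻¹ * h)) (π (ρ u)) := by
            rw [← commutatorElement_eq_one_iff_commute, ← map_commutatorElement]
            rw [QuotientGroup.mk'_apply, QuotientGroup.eq_one_iff]
            have : ⁅(ρ h)⁻¹ * h, ρ u⁆ ∈ ⁅H ⊓ Rj, U⁆ :=
              Subgroup.commutator_mem_commutator hmh hqu
            rw [hSe]; exact Subgroup.mem_sup_left this
          have c2 : Commute (π h) (π ((ρ u)⁻¹ * u)) := by
            rw [← commutatorElement_eq_one_iff_commute, ← map_commutatorElement]
            rw [QuotientGroup.mk'_apply, QuotientGroup.eq_one_iff]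
            have : ⁅h, (ρ u)⁻¹ * u⁆ ∈ ⁅H, S'⁆ :=
              Subgroup.commutator_mem_commutator hh hsu
            rw [hSe]; exact Subgroup.mem_sup_right this
          calc π ⁅ρ h, ρ u⁆ = ⁅π (ρ h), π (ρ u)⁆ := map_commutatorElement _ _ _
            _ = ⁅π (ρ h) * π ((ρ h)⁻¹ * h), π (ρ u)⁆ := (commElt_mul_left c1).symm
            _ = ⁅π h, π (ρ u)⁆ := by rw [← map_mul]; simp
            _ = ⁅π h, π (ρ u) * π ((ρ u)⁻¹ * u)⁆ := (commElt_mul_right c2).symm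
            _ = ⁅π h, π u⁆ := by rw [← map_mul]; simp
            _ = π ⁅h, u⁆ := (map_commutatorElement _ _ _).symm
      exact hTX hx



theorem ofFn_ne_nil {m : ℕ} (N : Fin (m + 1) → Subgroup F) : List.ofFn N ≠ [] := by
  simp [← List.length_eq_zero_iff]

theorem SmixL_le_iSup (Rj : Subgroup F) (hRj : Rj.Normal) :
    ∀ (l : ℕ) (N : Fin l → Subgroup F), (∀ i, (N i).Normal) →
      SmixL Rj (List.ofFn N) ≤
        ⨆ (b : Fin l → Bool) (_ : ∃ i, b i = true),
          iterCommutator (List.ofFn fun i => if b i then N i ⊓ Rj else N i) := by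
  intro l
  induction l with
  | zero => intro N _; simp [SmixL_nil]
  | succ m ih =>
    intro N hN
    haveI := hRj
    haveI := fun i => hN i
    cases m with
    | zero =>
      refine le_iSup_of_le (fun _ => true) (le_iSup_of_le ⟨0, rfl⟩ ?_)
      have h1 : List.ofFn N = [N 0] := by
        rw [List.ofFn_succ]; simp
      have h2 : (List.ofFn fun i : Fin 1 => if true then N i ⊓ Rj else N i) = [N 0 ⊓ Rj] := by
        rw [List.ofFn_succ]; simp
      rw [h1, h2, SmixL_singleton, iterCommutator_singleton]
    | succ m' =>
      have hofn : List.ofFn N = N 0 :: List.ofFn fun i : Fin (m' + 1) => N i.succ :=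
        List.ofFn_succ (f := N)
      have htne : (List.ofFn fun i : Fin (m' + 1) => N i.succ) ≠ [] := ofFn_ne_nil _
      rw [hofn, SmixL_cons _ _ _ htne]
      set N' : Fin (m' + 1) → Subgroup F := fun i => N i.succ with hN'
      have hN'norm : ∀ i, (N' i).Normal := fun i => hN i.succ
      apply sup_le
      · -- first piece: flag true at 0, false elsewhere
        set b : Fin (m' + 2) → Bool := Fin.cons true (fun _ => false) with hb
        refine le_iSup_of_le b (le_iSup_of_le ⟨0, by simp [hb]⟩ ?_)
        have hlist : (List.ofFn fun i => if b i then N i ⊓ Rj else N i)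
            = (N 0 ⊓ Rj) :: List.ofFn N' := by
          rw [List.ofFn_succ]
          simp [hb, hN']
        rw [hlist, iterCommutator_cons _ _ htne]
      · -- second piece: recurse
        have hmain : ⁅N 0, SmixL Rj (List.ofFn N')⁆ ≤
            ⨆ (b' : Fin (m' + 1) → Bool) (_ : ∃ i, b' i = true),
              ⁅N 0, iterCommutator (List.ofFn fun i => if b' i then N' i ⊓ Rj else N' i)⁆ := by
          have hKnorm : ∀ b' : Fin (m' + 1) → Bool,
              (⨆ _ : ∃ i, b' i = true,
                iterCommutator (List.ofFn fun i => if b' i then N' i ⊓ Rj else N' i)).Normal := by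
            intro b'
            refine normal_iSup _ fun _ => ?_
            refine normal_iterCommutator _ fun H' hH' => ?_
            rw [List.mem_ofFn] at hH'
            obtain ⟨i, rfl⟩ := hH'.imp fun i h => h.symm
            split
            · exact normal_inf' _ _ (hN'norm i) hRj
            · exact hN'norm i
          calc ⁅N 0, SmixL Rj (List.ofFn N')⁆
              ≤ ⁅N 0, ⨆ (b' : Fin (m' + 1) → Bool) (_ : ∃ i, b' i = true),
                  iterCommutator (List.ofFn fun i => if b' i then N' i ⊓ Rj else N' i)⁆ :=
                Subgroup.commutator_mono le_rfl (ih N' hN'norm)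
            _ ≤ ⨆ (b' : Fin (m' + 1) → Bool),
                  ⁅N 0, ⨆ _ : ∃ i, b' i = true,
                    iterCommutator (List.ofFn fun i => if b' i then N' i ⊓ Rj else N' i)⁆ :=
                commutator_iSup_le _ (hN 0) _ hKnorm
            _ ≤ ⨆ (b' : Fin (m' + 1) → Bool) (_ : ∃ i, b' i = true),
                  ⁅N 0, iterCommutator (List.ofFn fun i => if b' i then N' i ⊓ Rj else N' i)⁆ := by
                refine iSup_mono fun b' => ?_
                refine commutator_iSup_le _ (hN 0) _ fun _ => ?_
                refine normal_iterCommutator _ fun H' hH' => ?_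
                rw [List.mem_ofFn] at hH'
                obtain ⟨i, rfl⟩ := hH'.imp fun i h => h.symm
                split
                · exact normal_inf' _ _ (hN'norm i) hRj
                · exact hN'norm i
        refine hmain.trans ?_
        refine iSup_le fun b' => iSup_le fun hb' => ?_
        obtain ⟨i0, hi0⟩ := hb'
        set b : Fin (m' + 2) → Bool := Fin.cons false b' with hbdef
        refine le_iSup_of_le b
          (le_iSup_of_le ⟨i0.succ, by simp [hbdef, hi0]⟩ ?_)
        have hlist : (List.ofFn fun i : Fin (m' + 2) =>
              if b i then N i ⊓ Rj else N i)
            = N 0 :: List.ofFn fun i : Fin (m' + 1) => if b' i then N' i ⊓ Rj else N' i := by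
          rw [List.ofFn_succ]
          simp [hbdef, hN']
        rw [hlist, iterCommutator_cons _ _ (ofFn_ne_nil _)]



variable {n : ℕ} (R : Fin n → Subgroup F)

theorem adInf_empty : adInf R ∅ = ⊤ := by simp [adInf]

theorem adInf_normal (hR : ∀ i, (R i).Normal) (B : Finset (Fin n)) : (adInf R B).Normal := by
  constructor
  intro x hx g
  simp only [adInf, Subgroup.mem_iInf] at hx ⊢
  intro i hi
  exact (hR i).conj_mem x (hx i hi) g

theorem adInf_le_of_mem {B : Finset (Fin n)} {i : Fin n} (hi : i ∈ B) : adInf R B ≤ R i := by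
  rw [adInf]
  exact iInf₂_le i hi

theorem adInf_anti {B B' : Finset (Fin n)} (h : B ⊆ B') : adInf R B' ≤ adInf R B := by
  rw [adInf, adInf]
  exact le_iInf₂ fun i hi => iInf₂_le i (h hi)

theorem adInf_insert (j : Fin n) (B : Finset (Fin n)) :
    adInf R (insert j B) = adInf R B ⊓ R j := by
  rw [adInf, adInf, Finset.iInf_insert, inf_comm]

theorem adD_le_inf (k : ℕ) (hk : 1 ≤ k) (hR : ∀ i, (R i).Normal) (A : Finset (Fin n)) :
    adD R k A ≤ adInf R A ⊓ (⊤ : Subgroup F).lowerCentralSeries (k - 1) := by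
  rw [adD]
  refine iSup_le fun c => iSup_le fun hc => le_inf ?_ ?_
  · rw [adInf]
    refine le_iInf₂ fun i hi => ?_
    rw [← hc] at hi
    rw [Finset.mem_sup] at hi
    obtain ⟨m, -, him⟩ := hi
    refine iterCommutator_le_of_mem (hR i) _ (adInf R (c m)) ?_ (adInf_le_of_mem R him)
    rw [List.mem_ofFn]
    exact ⟨m, rfl⟩
  · have := iterCommutator_le_lcs (List.ofFn fun i => adInf R (c i))
    simpa using this

theorem adD_le_R (k : ℕ) (hk : 1 ≤ k) (hR : ∀ i, (R i).Normal) {A : Finset (Fin n)}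
    {j : Fin n} (hj : j ∈ A) : adD R k A ≤ R j :=
  ((adD_le_inf R k hk hR A).trans inf_le_left).trans (adInf_le_of_mem R hj)

theorem adD_normal (hR : ∀ i, (R i).Normal) (k : ℕ) (A : Finset (Fin n)) :
    (adD R k A).Normal := by
  rw [adD]
  refine normal_iSup _ fun c => normal_iSup _ fun _ => ?_
  refine normal_iterCommutator _ fun H hH => ?_
  rw [List.mem_ofFn] at hH
  obtain ⟨i, rfl⟩ := hH.imp fun i h => h.symm
  exact adInf_normal R hR _

theorem adD_empty (k : ℕ) (hk : 1 ≤ k) (hR : ∀ i, (R i).Normal) :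
    adD R k (∅ : Finset (Fin n)) = (⊤ : Subgroup F).lowerCentralSeries (k - 1) := by
  refine le_antisymm ?_ ?_
  · exact (adD_le_inf R k hk hR ∅).trans inf_le_right
  · rw [adD]
    refine le_iSup_of_le (fun _ => ∅)
      (le_iSup_of_le ((Finset.sup_le fun i _ => le_rfl).antisymm bot_le) ?_)
    have h1 : (List.ofFn fun _ : Fin k => adInf R ∅) = List.replicate k (⊤ : Subgroup F) := by
      rw [adInf_empty, List.ofFn_const]
    rw [h1]
    obtain ⟨m, rfl⟩ := Nat.exists_eq_add_of_le hk
    rw [show 1 + m = m + 1 from Nat.add_comm 1 m, iterCommutator_replicate_top]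
    simp



theorem SmixL_adInf_le_adD (hR : ∀ i, (R i).Normal) (k : ℕ) (hk : 1 ≤ k) (j : Fin n)
    (c : Fin k → Finset (Fin n)) (hc : Finset.univ.sup c = Finset.Iio j) :
    SmixL (R j) (List.ofFn fun i => adInf R (c i)) ≤ adD R k (Finset.Iic j) := by
  have h1 := SmixL_le_iSup (R j) (hR j) k (fun i => adInf R (c i))
    (fun i => adInf_normal R hR _)
  refine h1.trans ?_
  refine iSup_le fun b => iSup_le fun hb => ?_
  obtain ⟨i0, hi0⟩ := hb
  set c'' : Fin k → Finset (Fin n) := fun i => if b i then insert j (c i) else c i with hc''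
  have hfun : (fun i => if b i then adInf R (c i) ⊓ R j else adInf R (c i))
      = fun i => adInf R (c'' i) := by
    funext i
    by_cases h : b i = true
    · simp only [hc'', h, if_true, adInf_insert]
    · simp only [hc'', h, if_false, Bool.not_eq_true] at *
      simp [h]
  rw [hfun]
  have hsup : Finset.univ.sup c'' = Finset.Iic j := by
    refine le_antisymm ?_ ?_
    · refine Finset.sup_le fun i _ => ?_
      have hci : c i ⊆ Finset.Iio j := by
        rw [← hc]
        show c i ≤ Finset.univ.sup c
        exact Finset.le_sup (Finset.mem_univ i)
      have hci' : c i ⊆ Finset.Iic j := hci.trans fun x hx =>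
        Finset.mem_Iic.mpr (Finset.mem_Iio.mp hx).le
      by_cases h : b i = true
      · simp only [hc'', h, if_true]
        exact Finset.insert_subset (Finset.mem_Iic.mpr le_rfl) hci'
      · simp only [hc'', h, if_false, Bool.not_eq_true] at *
        simpa [h] using hci'
    · rw [← Finset.Iio_insert j]
      refine Finset.insert_subset_iff.mpr ⟨?_, ?_⟩
      · refine Finset.mem_sup.mpr ⟨i0, Finset.mem_univ _, ?_⟩
        simp [hc'', hi0]
      · rw [← hc]
        show Finset.univ.sup c ≤ Finset.univ.sup c''
        refine Finset.sup_mono_fun fun i _ => ?_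
        by_cases h : b i = true
        · simp only [hc'', h, if_true]
          exact Finset.subset_insert _ _
        · simp only [hc'', h, if_false, Bool.not_eq_true] at *
          simp [h]
  rw [adD]
  exact le_iSup_of_le c'' (le_iSup_of_le hsup le_rfl)

theorem step_lemma (hR : ∀ i, (R i).Normal) (k : ℕ) (hk : 2 ≤ k) (j : Fin n)
    (F' : Subgroup F) (hbot : F' ⊓ R j = ⊥)
    (hsplit : ∀ A : Finset (Fin n), (∀ i ∈ A, i < j) →
      (adInf R A : Set F) = (↑(adInf R A ⊓ F') : Set F) * (↑(adInf R A ⊓ R j) : Set F))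
    (hprev : adInf R (Finset.Iio j) ⊓ (⊤ : Subgroup F).lowerCentralSeries (k - 1)
      = adD R k (Finset.Iio j)) :
    adInf R (Finset.Iic j) ⊓ (⊤ : Subgroup F).lowerCentralSeries (k - 1) = adD R k (Finset.Iic j) := by
  haveI := hR j
  refine le_antisymm ?_ (adD_le_inf R k (by omega) hR _)
  -- build the retraction ρ
  have hTop : ∀ x : F, ∃ p ∈ F', ∃ m ∈ R j, p * m = x := by
    intro x
    have h := hsplit ∅ (by simp)
    have hx : x ∈ (adInf R (∅ : Finset (Fin n)) : Set F) := by
      rw [adInf_empty]; trivial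
    rw [h] at hx
    obtain ⟨p, hp, m, hm, hpm⟩ := hx
    rw [SetLike.mem_coe, Subgroup.mem_inf] at hp hm
    exact ⟨p, hp.2, m, hm.2, hpm⟩
  set e : F' →* F ⧸ R j := (QuotientGroup.mk' (R j)).comp F'.subtype with he
  have hesurj : Function.Surjective e := by
    intro y
    refine QuotientGroup.induction_on y ?_
    intro x
    obtain ⟨p, hp, m, hm, rfl⟩ := hTop x
    refine ⟨⟨p, hp⟩, ?_⟩
    have h1 : (p : F)⁻¹ * (p * m) ∈ R j := by
      have : (p : F)⁻¹ * (p * m) = m := by group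
      rw [this]; exact hm
    simpa [he, QuotientGroup.mk'_apply] using QuotientGroup.eq.mpr h1
  have heinj : Function.Injective e := by
    intro a b hab
    have h1 : (↑a : F)⁻¹ * ↑b ∈ R j := by
      refine QuotientGroup.eq.mp ?_
      simpa [he, QuotientGroup.mk'_apply] using hab
    have h2 : (↑a : F)⁻¹ * ↑b ∈ F' := Subgroup.mul_mem _ (Subgroup.inv_mem _ a.2) b.2
    have h3 : (↑a : F)⁻¹ * ↑b ∈ F' ⊓ R j := Subgroup.mem_inf.mpr ⟨h2, h1⟩
    rw [hbot, Subgroup.mem_bot] at h3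
    exact Subtype.ext (inv_mul_eq_one.mp h3)
  set ι := MulEquiv.ofBijective e ⟨heinj, hesurj⟩ with hι
  set ρ : F →* F := F'.subtype.comp (ι.symm.toMonoidHom.comp (QuotientGroup.mk' (R j)))
    with hρ
  have hρdef : ∀ x : F, ρ x = ↑(ι.symm ((QuotientGroup.mk' (R j)) x)) := fun x => rfl
  have hρmem : ∀ x : F, ρ x ∈ F' := fun x => by
    rw [hρdef]; exact (ι.symm _).2
  have hρF' : ∀ p ∈ F', ρ p = p := by
    intro p hp
    rw [hρdef]
    have h1 : ι ⟨p, hp⟩ = (QuotientGroup.mk' (R j)) p := rfl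
    rw [← h1, MulEquiv.symm_apply_apply]
  have hρRj : ∀ m ∈ R j, ρ m = 1 := by
    intro m hm
    rw [hρdef]
    have h1 : (QuotientGroup.mk' (R j)) m = 1 := by
      rw [QuotientGroup.mk'_apply, QuotientGroup.eq_one_iff]; exact hm
    rw [h1, map_one]
    rfl
  have hsplitN : ∀ B : Finset (Fin n), (∀ i ∈ B, i < j) →
      ∀ x ∈ adInf R B, ρ x ∈ adInf R B ∧ (ρ x)⁻¹ * x ∈ adInf R B ⊓ R j := by
    intro B hB x hx
    have h := hsplit B hB
    have hx' : x ∈ (adInf R B : Set F) := hx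
    rw [h] at hx'
    obtain ⟨p, hp, m, hm, hpm⟩ := hx'
    rw [SetLike.mem_coe, Subgroup.mem_inf] at hp hm
    have hρx : ρ x = p := by
      rw [← hpm, map_mul, hρF' p hp.2, hρRj m hm.2, mul_one]
    constructor
    · rw [hρx]; exact hp.1
    · rw [hρx, ← hpm]
      have h2 : p⁻¹ * (p * m) = m := by group
      rw [h2]
      exact Subgroup.mem_inf.mpr hm
  -- main inclusion
  intro w hw
  rw [Subgroup.mem_inf] at hw
  obtain ⟨hw1, hw2⟩ := hw
  have hwRj : w ∈ R j := adInf_le_of_mem R (Finset.mem_Iic.mpr le_rfl) hw1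
  have hwprev : w ∈ adD R k (Finset.Iio j) := by
    rw [← hprev, Subgroup.mem_inf]
    refine ⟨adInf_anti R (fun x hx => ?_) hw1, hw2⟩
    exact Finset.mem_Iic.mpr (Finset.mem_Iio.mp hx).le
  have hDnorm := adD_normal R hR k (Finset.Iic j)
  set Y : Subgroup F :=
    { carrier := {x | (ρ x)⁻¹ * x ∈ adD R k (Finset.Iic j)}
      one_mem' := by simp [Subgroup.one_mem]
      mul_mem' := by
        intro a b ha hb
        show (ρ (a * b))⁻¹ * (a * b) ∈ adD R k (Finset.Iic j)
        have heq : (ρ (a * b))⁻¹ * (a * b)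
            = ((ρ b)⁻¹ * ((ρ a)⁻¹ * a) * (ρ b)) * ((ρ b)⁻¹ * b) := by
          rw [map_mul]; group
        rw [heq]
        refine Subgroup.mul_mem _ ?_ hb
        have := hDnorm.conj_mem _ ha (ρ b)⁻¹
        simpa using this
      inv_mem' := by
        intro a ha
        show (ρ a⁻¹)⁻¹ * a⁻¹ ∈ adD R k (Finset.Iic j)
        have heq : (ρ a⁻¹)⁻¹ * a⁻¹ = (ρ a) * ((ρ a)⁻¹ * a)⁻¹ * (ρ a)⁻¹ := by
          rw [map_inv]; group
        rw [heq]
        exact hDnorm.conj_mem _ (Subgroup.inv_mem _ ha) (ρ a) } with hY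
  have hDY : adD R k (Finset.Iio j) ≤ Y := by
    rw [adD]
    refine iSup_le fun c => iSup_le fun hc => ?_
    intro x hx
    have hlistnorm : ∀ H ∈ (List.ofFn fun i => adInf R (c i)), H.Normal := by
      intro H hH; rw [List.mem_ofFn] at hH
      obtain ⟨i, rfl⟩ := hH.imp fun i h => h.symm
      exact adInf_normal R hR _
    have hlistsplit : ∀ H ∈ (List.ofFn fun i => adInf R (c i)), ∀ y ∈ H,
        ρ y ∈ H ∧ (ρ y)⁻¹ * y ∈ H ⊓ R j := by
      intro H hH; rw [List.mem_ofFn] at hH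
      obtain ⟨i, rfl⟩ := hH.imp fun i h => h.symm
      intro y hy
      refine hsplitN (c i) (fun x' hx' => ?_) y hy
      have hsub : c i ⊆ Finset.Iio j := by
        rw [← hc]
        show c i ≤ Finset.univ.sup c
        exact Finset.le_sup (Finset.mem_univ i)
      exact Finset.mem_Iio.mp (hsub hx')
    have hkey := key_lemma (R j) (hR j) ρ _ hlistnorm hlistsplit x hx
    show (ρ x)⁻¹ * x ∈ adD R k (Finset.Iic j)
    exact (SmixL_adInf_le_adD R hR k (by omega) j c hc) hkey.2
  have hw3 : (ρ w)⁻¹ * w ∈ adD R k (Finset.Iic j) := hDY hwprev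
  have hρw1 : ρ w = 1 := by
    have h2 : (ρ w)⁻¹ * w ∈ R j :=
      adD_le_R R k (by omega) hR (Finset.mem_Iic.mpr le_rfl) hw3
    have h1 : ρ w ∈ R j := by
      have heq : ρ w = w * ((ρ w)⁻¹ * w)⁻¹ := by group
      rw [heq]
      exact Subgroup.mul_mem _ hwRj (Subgroup.inv_mem _ h2)
    have h3 : ρ w ∈ F' ⊓ R j := Subgroup.mem_inf.mpr ⟨hρmem w, h1⟩
    rw [hbot, Subgroup.mem_bot] at h3
    exact h3
  have hfin : (ρ w)⁻¹ * w = w := by rw [hρw1]; group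
  rw [← hfin]
  exact hw3

end AdProof

/-- If for every `j` the `(j+1)`-ad `(F;R₁,…,R_j)` is simple relative to `R_j`, then for
`k ≥ 2` and every `j`: `(⋂_{i≤j} R_i) ∩ Γ_k(F) = D_k(F;⟨j⟩)`
(where `Γ_k(F) = (⊤ : Subgroup F).lowerCentralSeries (k-1)`). -/
theorem adInf_inter_gamma_eq_adD {F : Type*} [Group F] {n : ℕ}
    (R : Fin n → Subgroup F) (hR : ∀ i, (R i).Normal) (k : ℕ) (hk : 2 ≤ k)
    (hsimple : ∀ j : Fin n, ∃ F' : Subgroup F, F' ⊓ R j = ⊥ ∧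
      ∀ A : Finset (Fin n), (∀ i ∈ A, i < j) →
        (adInf R A : Set F) = (↑(adInf R A ⊓ F') : Set F) * (↑(adInf R A ⊓ R j) : Set F)) :
    ∀ j : Fin n, adInf R (Finset.Iic j) ⊓ (⊤ : Subgroup F).lowerCentralSeries (k - 1)
      = adD R k (Finset.Iic j) := by
  suffices h : ∀ m : ℕ, ∀ j : Fin n, j.val ≤ m →
      adInf R (Finset.Iic j) ⊓ (⊤ : Subgroup F).lowerCentralSeries (k - 1) = adD R k (Finset.Iic j) by
    intro j; exact h j.val j le_rfl
  intro m
  induction m with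
  | zero =>
    intro j hj
    obtain ⟨Fj, hbot, hsp⟩ := hsimple j
    refine AdProof.step_lemma R hR k hk j Fj hbot hsp ?_
    have hIio : Finset.Iio j = (∅ : Finset (Fin n)) := by
      ext x
      simp only [Finset.mem_Iio, Finset.notMem_empty, iff_false]
      intro hlt
      have h1 := Fin.lt_def.mp hlt
      omega
    rw [hIio, AdProof.adInf_empty, AdProof.adD_empty R k (by omega) hR, top_inf_eq]
  | succ m ihm =>
    intro j hj
    rcases Nat.lt_or_ge j.val (m + 1) with h | h
    · exact ihm j (by omega)
    · have hjv : j.val = m + 1 := le_antisymm hj h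
      obtain ⟨Fj, hbot, hsp⟩ := hsimple j
      refine AdProof.step_lemma R hR k hk j Fj hbot hsp ?_
      have hjn := j.isLt
      set j' : Fin n := ⟨m, by omega⟩ with hj'
      have hIio : Finset.Iio j = Finset.Iic j' := by
        ext x
        simp only [Finset.mem_Iio, Finset.mem_Iic, Fin.lt_def, Fin.le_def, hjv, hj']
        omega
      rw [hIio]
      exact ihm j' (by simp [hj'])
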